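/- Let K be a field, q ∈ K nonzero, and let a weighted graph on vertices {1,…,n} have symmetric weights a_{ij} ∈ K such that the underlying simple graph (edges are pairs {i,j} with a_{ij} ≠ 0) contains no cycle (is a forest). Let S be the upper triangular matrix with 1's on the diagonal and −a_{ij} in position (i,j) for i < j, let C = S + Sᵀ, and let A be the weight matrix (A_{ij} = a_{ij} for i ≠ j, A_{ii} = 0, so C = 2I − A). Then the Coxeter polynomial equals the characteristic polynomial of the graph evaluated at z = q + q⁻¹: det(q·S + q⁻¹·Sᵀ) = det((q + q⁻¹)·I − A). -/

import Mathlib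

open Matrix Finset

/-- For a weighted graph whose underlying simple graph is a forest (acyclic),
the Coxeter polynomial `det (q • S + q⁻¹ • Sᵀ)` coincides with the characteristic
polynomial `det (z • I - A)` of the weight matrix `A` evaluated at `z = q + q⁻¹`. -/
theorem coxeter_eq_charpoly_of_forest {K : Type*} [Field K] (n : ℕ)
    (a : Fin n → Fin n → K) (hsym : ∀ i j, a i j = a j i)
    (q : K) (hq : q ≠ 0)
    (G : SimpleGraph (Fin n))
    (hG : ∀ i j, G.Adj i j ↔ i ≠ j ∧ a i j ≠ 0)
    (hforest : G.IsAcyclic)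
    (S : Matrix (Fin n) (Fin n) K)
    (hS : ∀ i j, S i j = if i = j then 1 else if i < j then -a i j else 0)
    (A : Matrix (Fin n) (Fin n) K)
    (hA : ∀ i j, A i j = if i = j then 0 else a i j) :
    (q • S + q⁻¹ • Sᵀ).det = ((q + q⁻¹) • (1 : Matrix (Fin n) (Fin n) K) - A).det := by
  set M := q • S + q⁻¹ • Sᵀ with hMdef
  set N := (q + q⁻¹) • (1 : Matrix (Fin n) (Fin n) K) - A with hNdef
  have hMd : ∀ i, M i i = q + q⁻¹ := by
    intro i
    simp [hMdef, Matrix.add_apply, Matrix.smul_apply, Matrix.transpose_apply, hS i i]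
  have hNd : ∀ i, N i i = q + q⁻¹ := by
    intro i
    simp [hNdef, Matrix.sub_apply, Matrix.smul_apply, Matrix.one_apply, hA i i]
  have hMo : ∀ i j, i ≠ j → M i j = (if i < j then -q else -q⁻¹) * a i j := by
    intro i j hij
    rcases lt_or_gt_of_ne hij with h | h
    · simp [hMdef, Matrix.add_apply, Matrix.smul_apply, Matrix.transpose_apply,
        hS i j, hS j i, hij, hij.symm, h, not_lt_of_gt h]
    · simp [hMdef, Matrix.add_apply, Matrix.smul_apply, Matrix.transpose_apply,
        hS i j, hS j i, hij, hij.symm, h, not_lt_of_gt h, hsym i j]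
  have hNo : ∀ i j, i ≠ j → N i j = -a i j := by
    intro i j hij
    simp [hNdef, Matrix.sub_apply, Matrix.smul_apply, Matrix.one_apply, hA i j, hij]
  have hM0 : ∀ i j, (M i j = 0 ↔ N i j = 0) := by
    intro i j
    by_cases hij : i = j
    · subst hij; rw [hMd, hNd]
    · rw [hMo i j hij, hNo i j hij]
      constructor
      · intro h
        rcases mul_eq_zero.mp h with h | h
        · exfalso; revert h; split <;> simp [hq, inv_ne_zero hq]
        · simp [h]
      · intro h
        have : a i j = 0 := by simpa using h
        simp [this]
  rw [Matrix.det_apply, Matrix.det_apply]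
  refine Finset.sum_congr rfl fun σ _ => ?_
  suffices h : ∏ i, M (σ i) i = ∏ i, N (σ i) i by rw [h]
  by_cases h0 : ∃ i, M (σ i) i = 0
  · obtain ⟨i, hi⟩ := h0
    rw [show (∏ j, M (σ j) j) = 0 from Finset.prod_eq_zero (Finset.mem_univ i) hi,
      show (∏ j, N (σ j) j) = 0 from Finset.prod_eq_zero (Finset.mem_univ i) ((hM0 _ _).mp hi)]
  push_neg at h0
  have hN0 : ∀ i, N (σ i) i ≠ 0 := fun i hi => h0 i ((hM0 _ _).mpr hi)
  have hadj : ∀ j, σ j ≠ j → G.Adj (σ j) j := by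
    intro j hj
    refine (hG _ _).mpr ⟨hj, fun ha => h0 j ?_⟩
    rw [hMo _ _ hj, ha, mul_zero]
  have hinv : ∀ i, σ (σ i) = i := by
    by_contra hcon
    push_neg at hcon
    obtain ⟨i, hi⟩ := hcon
    have hσi : σ i ≠ i := fun h => hi (by rw [h, h])
    have hmoved : ∀ m : ℕ, σ ((⇑σ)^[m] i) ≠ (⇑σ)^[m] i := by
      intro m h
      apply hσi
      have h2 : (⇑σ)^[m] (σ i) = (⇑σ)^[m] i := by
        rw [← Function.iterate_succ_apply, Function.iterate_succ_apply', h]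
      exact (σ.injective.iterate m) h2
    set k := Function.minimalPeriod (⇑σ) i with hkdef
    have hper : Function.IsPeriodicPt (⇑σ) (orderOf σ) i := by
      show (⇑σ)^[orderOf σ] i = i
      rw [Equiv.Perm.iterate_eq_pow, pow_orderOf_eq_one]
      rfl
    have hkpos : 0 < k := hper.minimalPeriod_pos (orderOf_pos σ)
    have hki : (⇑σ)^[k] i = i := Function.iterate_minimalPeriod
    have hk3 : 3 ≤ k := by
      rcases Nat.lt_or_ge k 3 with h | h
      · interval_cases k
        · exact absurd hki hσi
        · exact absurd hki hi
      · exact h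
    have hw : ∀ m : ℕ, ∃ w : G.Walk i ((⇑σ)^[m] i),
        w.support = (List.range (m + 1)).map (fun t => (⇑σ)^[t] i) := by
      intro m
      induction m with
      | zero => exact ⟨SimpleGraph.Walk.nil, by simp [List.range_succ]⟩
      | succ m ih =>
        obtain ⟨w, hws⟩ := ih
        have hadj' : G.Adj ((⇑σ)^[m] i) ((⇑σ)^[m + 1] i) := by
          rw [Function.iterate_succ_apply']
          exact (hadj _ (hmoved m)).symm
        refine ⟨w.concat hadj', ?_⟩
        rw [SimpleGraph.Walk.support_concat, hws, List.range_succ]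
        simp [pow_succ, Equiv.Perm.mul_apply, List.range_succ]
    obtain ⟨w, hws⟩ := hw (k - 1)
    have hk1 : k - 1 + 1 = k := Nat.succ_pred_eq_of_pos hkpos
    have hnodup : w.support.Nodup := by
      rw [hws, hk1]
      refine List.Nodup.map_on ?_ List.nodup_range
      intro x hx y hy hxy
      exact Function.iterate_injOn_Iio_minimalPeriod
        (by simpa using List.mem_range.mp hx) (by simpa using List.mem_range.mp hy) hxy
    have hfix : σ ((⇑σ)^[k - 1] i) = i := by
      have h := Function.iterate_succ_apply' (⇑σ) (k - 1) i
      simp only [Nat.succ_eq_add_one] at h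
      rw [hk1] at h
      rw [← h, hki]
    have he : G.Adj i ((⇑σ)^[k - 1] i) := by
      have h := hadj _ (hmoved (k - 1))
      rwa [hfix] at h
    have hup := SimpleGraph.isAcyclic_iff_path_unique.mp hforest
      ⟨w, by rw [SimpleGraph.Walk.isPath_def]; exact hnodup⟩ (SimpleGraph.Path.singleton he)
    have hval : w = (SimpleGraph.Path.singleton he).val := congrArg Subtype.val hup
    have hlen : w.length = 1 := by rw [hval]; simp [SimpleGraph.Path.singleton]
    have hsl : w.support.length = k := by rw [hws, hk1]; simp
    rw [SimpleGraph.Walk.length_support, hlen] at hsl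
    omega
  -- now σ is an involution with all factors nonzero
  have key : ∀ j, σ j ≠ j → M (σ j) j * M j (σ j) = N (σ j) j * N j (σ j) := by
    intro j hj
    rw [hMo _ _ hj, hMo _ _ (Ne.symm hj), hNo _ _ hj, hNo _ _ (Ne.symm hj)]
    rcases lt_or_gt_of_ne hj with h | h
    · rw [if_pos h, if_neg (not_lt_of_gt h)]
      field_simp
    · rw [if_neg (not_lt_of_gt h), if_pos h]
      field_simp
  have h1 : ∏ i, (M (σ i) i / N (σ i) i) = 1 := by
    refine Finset.prod_ninvolution σ ?_ ?_ (fun i => Finset.mem_univ _) hinv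
    · intro j
      by_cases hj : σ j = j
      · have hx : N (σ j) j ≠ 0 := hN0 j
        simp only [hj] at hx ⊢
        rw [show M j j = N j j by rw [hMd, hNd], div_self hx, one_mul]
      · have h2 : σ (σ j) = j := hinv j
        have hx1 : N (σ j) j ≠ 0 := hN0 j
        have hx2 : N j (σ j) ≠ 0 := by have := hN0 (σ j); rwa [h2] at this
        rw [div_mul_div_comm, h2, div_eq_one_iff_eq (mul_ne_zero hx1 hx2)]
        exact key j hj
    · intro j hne
      intro hj
      apply hne
      have hx : N (σ j) j ≠ 0 := hN0 j
      simp only [hj] at hx ⊢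
      rw [show M j j = N j j by rw [hMd, hNd], div_self hx]
  have h2 : (∏ i, M (σ i) i) / (∏ i, N (σ i) i) = 1 := by
    rw [← Finset.prod_div_distrib, h1]
  have hNprod : (∏ i, N (σ i) i) ≠ 0 := Finset.prod_ne_zero_iff.mpr fun i _ => hN0 i
  rw [div_eq_one_iff_eq hNprod] at h2
  exact h2
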